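/- For every natural number B ≥ 2, the busNNN double-step permutation σ = A ∘ I achieves full connectivity between columns within 2B−1 double-steps: for every pair of distinct columns a ≠ b in {0,…,2B−1} there exist t ∈ {0,…,2B−2} and a bus j ∈ {0,…,B−1} such that {σ^t(a), σ^t(b)} = {2j, 2j+1}. -/

import Mathlib

/-- The inter-bus layer `I` on the `2B` positions of the busNNN column model:
the product of the transpositions `(2j+1, 2j+2)` for `j = 0, …, B-2`. -/
def interLayer (B : ℕ) : Equiv.Perm (Fin (2 * B)) :=
  ((List.range (B - 1)).attach.map (fun j =>
    Equiv.swap ⟨2 * j.1 + 1, by have := List.mem_range.mp j.2; omega⟩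
               ⟨2 * j.1 + 2, by have := List.mem_range.mp j.2; omega⟩)).prod

/-- The intra-bus layer `A` on the `2B` positions of the busNNN column model:
the product of the transpositions `(2j, 2j+1)` for `j = 0, …, B-2`
(i.e. on every bus except the last). -/
def intraLayer (B : ℕ) : Equiv.Perm (Fin (2 * B)) :=
  ((List.range (B - 1)).attach.map (fun j =>
    Equiv.swap ⟨2 * j.1, by have := List.mem_range.mp j.2; omega⟩
               ⟨2 * j.1 + 1, by have := List.mem_range.mp j.2; omega⟩)).prod

/-- The positions `x` and `y` together occupy bus `j`, i.e. `{x, y} = {2j, 2j+1}`. -/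
def OnBus (B j : ℕ) (x y : Fin (2 * B)) : Prop :=
  (x.1 = 2 * j ∧ y.1 = 2 * j + 1) ∨ (x.1 = 2 * j + 1 ∧ y.1 = 2 * j)

/-! ### Auxiliary machinery -/

/-- A total version of the transposition `(a, b)` on `Fin (2*B)`. -/
def busSw (B a b : ℕ) : Equiv.Perm (Fin (2 * B)) :=
  if h : a < 2 * B ∧ b < 2 * B then Equiv.swap ⟨a, h.1⟩ ⟨b, h.2⟩ else 1

lemma interLayer_eq (B : ℕ) :
    interLayer B = ((List.range (B - 1)).map (fun j => busSw B (2*j+1) (2*j+2))).prod := by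
  unfold interLayer
  congr 1
  rw [← List.attach_map_val (l := List.range (B - 1)) (f := (fun j => busSw B (2*j+1) (2*j+2)))]
  apply List.map_congr_left
  intro j _
  have hj := List.mem_range.mp j.2
  simp only [busSw]
  rw [dif_pos ⟨by omega, by omega⟩]

lemma intraLayer_eq (B : ℕ) :
    intraLayer B = ((List.range (B - 1)).map (fun j => busSw B (2*j) (2*j+1))).prod := by
  unfold intraLayer
  congr 1
  rw [← List.attach_map_val (l := List.range (B - 1)) (f := (fun j => busSw B (2*j) (2*j+1)))]
  apply List.map_congr_left
  intro j _
  have hj := List.mem_range.mp j.2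
  simp only [busSw]
  rw [dif_pos ⟨by omega, by omega⟩]

lemma busSw_apply (B a b : ℕ) (ha : a < 2*B) (hb : b < 2*B) (x : Fin (2*B)) :
    ((busSw B a b) x).1 = if x.1 = a then b else if x.1 = b then a else x.1 := by
  simp only [busSw, dif_pos (⟨ha, hb⟩ : a < 2*B ∧ b < 2*B), Equiv.swap_apply_def]
  split_ifs with h1 h2 h3 h4 h5 <;> simp_all [Fin.ext_iff]

lemma inter_prod_apply (B : ℕ) : ∀ n, n ≤ B - 1 → ∀ x : Fin (2*B),
    ((((List.range n).map (fun j => busSw B (2*j+1) (2*j+2))).prod) x).1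
      = if 1 ≤ x.1 ∧ x.1 ≤ 2*n then (if x.1 % 2 = 1 then x.1 + 1 else x.1 - 1) else x.1 := by
  intro n
  induction n with
  | zero => intro _ x; simp; split_ifs <;> omega
  | succ n ih =>
    intro hn x
    rw [List.range_succ, List.map_append, List.prod_append, List.map_singleton,
      List.prod_singleton, Equiv.Perm.mul_apply, ih (by omega)]
    have hx := x.2
    have hy := busSw_apply B (2*n+1) (2*n+2) (by omega) (by omega) x
    rw [hy]
    split_ifs <;> omega

lemma intra_prod_apply (B : ℕ) : ∀ n, n ≤ B - 1 → ∀ x : Fin (2*B),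
    ((((List.range n).map (fun j => busSw B (2*j) (2*j+1))).prod) x).1
      = if x.1 < 2*n then (if x.1 % 2 = 0 then x.1 + 1 else x.1 - 1) else x.1 := by
  intro n
  induction n with
  | zero => intro _ x; simp
  | succ n ih =>
    intro hn x
    rw [List.range_succ, List.map_append, List.prod_append, List.map_singleton,
      List.prod_singleton, Equiv.Perm.mul_apply, ih (by omega)]
    have hx := x.2
    have hy := busSw_apply B (2*n) (2*n+1) (by omega) (by omega) x
    rw [hy]
    split_ifs <;> omega

/-- The value of `σ = A ∘ I` as a function on `ℕ`. -/
def sigmaF (B x : ℕ) : ℕ :=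
  if x = 0 then 1
  else if x = 2*B - 1 then x
  else if x % 2 = 1 then (if x = 2*B - 3 then 2*B - 2 else x + 2)
  else x - 2

lemma sigma_apply (B : ℕ) (hB : 2 ≤ B) (x : Fin (2*B)) :
    ((intraLayer B * interLayer B) x).1 = sigmaF B x.1 := by
  rw [Equiv.Perm.mul_apply, intraLayer_eq, interLayer_eq]
  rw [intra_prod_apply B (B-1) le_rfl, inter_prod_apply B (B-1) le_rfl]
  have hx := x.2
  unfold sigmaF
  split_ifs <;> (try exact ‹False›.elim) <;> omega

/-- The position of the `i`-th entry of the long `(2B-1)`-cycle of `σ`. -/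
def busPos (B i : ℕ) : ℕ :=
  if i = 0 then 0 else if i ≤ B - 1 then 2*i - 1 else 2*(2*B - 1 - i)

lemma busPos_lt (B i : ℕ) (hB : 2 ≤ B) (hi : i < 2*B - 1) : busPos B i < 2*B := by
  unfold busPos; split_ifs <;> omega

lemma sigmaF_busPos (B i : ℕ) (hB : 2 ≤ B) (hi : i < 2*B - 1) :
    sigmaF B (busPos B i) = busPos B ((i + 1) % (2*B - 1)) := by
  rcases Nat.lt_or_ge (i+1) (2*B-1) with h | h
  · rw [Nat.mod_eq_of_lt h]
    unfold sigmaF busPos; split_ifs <;> (try exact ‹False›.elim) <;> omega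
  · have hi1 : i + 1 = 2*B - 1 := by omega
    rw [hi1, Nat.mod_self]
    unfold sigmaF busPos; split_ifs <;> (try exact ‹False›.elim) <;> omega

lemma mod2N (N m : ℕ) (h : m < 2*N) :
    m % N = if m < N then m else m - N := by
  split_ifs with h1
  · exact Nat.mod_eq_of_lt h1
  · rcases Nat.eq_zero_or_pos N with rfl | h0
    · simp
    · rw [Nat.mod_eq_sub_mod (by omega), Nat.mod_eq_of_lt (by omega)]

lemma pow_busPos (B : ℕ) (hB : 2 ≤ B) (t : ℕ) : ∀ i, (hi : i < 2*B-1) →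
    ((((intraLayer B * interLayer B)) ^ t) ⟨busPos B i, busPos_lt B i hB hi⟩).1
      = busPos B ((i + t) % (2*B-1)) := by
  induction t with
  | zero => intro i hi; simp [Nat.mod_eq_of_lt hi]
  | succ t ih =>
    intro i hi
    rw [pow_succ, Equiv.Perm.mul_apply]
    have hσ : (intraLayer B * interLayer B) ⟨busPos B i, busPos_lt B i hB hi⟩
        = ⟨busPos B ((i+1) % (2*B-1)),
            busPos_lt B _ hB (Nat.mod_lt _ (by omega))⟩ := by
      apply Fin.ext
      rw [sigma_apply B hB]
      exact sigmaF_busPos B i hB hi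
    rw [hσ, ih _ (Nat.mod_lt _ (by omega)), Nat.mod_add_mod]
    have : i + 1 + t = i + (t+1) := by omega
    rw [this]

lemma pow_fixed (B : ℕ) (hB : 2 ≤ B) (t : ℕ) (x : Fin (2*B)) (hx : x.1 = 2*B - 1) :
    (((intraLayer B * interLayer B)) ^ t) x = x := by
  have hfix : (intraLayer B * interLayer B) x = x := by
    apply Fin.ext
    rw [sigma_apply B hB]
    unfold sigmaF
    split_ifs <;> omega
  induction t with
  | zero => simp
  | succ t ih => rw [pow_succ, Equiv.Perm.mul_apply, hfix, ih]

lemma exists_index (B x : ℕ) (hB : 2 ≤ B) (hx : x < 2*B) (hne : x ≠ 2*B - 1) :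
    ∃ i < 2*B - 1, busPos B i = x := by
  refine ⟨if x = 0 then 0 else if x % 2 = 1 then (x+1)/2 else 2*B - 1 - x/2, ?_, ?_⟩
  · split_ifs <;> omega
  · unfold busPos; split_ifs <;> (try exact ‹False›.elim) <;> omega

lemma shift' (N i k u d : ℕ) (hi : i < N) (hk : k < N) (hu : u < N) (hd : d < N)
    (hkd : k = (i + d) % N) : (k + (u + N - i) % N) % N = (u + d) % N := by
  have hN : 0 < N := by omega
  have ht : (u + N - i) % N < N := Nat.mod_lt _ hN
  rw [mod2N N (k + (u + N - i) % N) (by omega), mod2N N (u + d) (by omega),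
    mod2N N (u + N - i) (by omega)]
  rw [mod2N N (i + d) (by omega)] at hkd
  split_ifs at * <;> omega

lemma core (B i k : ℕ) (hB : 2 ≤ B) (hi : i < 2*B-1) (hk : k < 2*B-1) (hik : i ≠ k) :
    ∃ t < 2*B-1, ∃ j < B,
      (busPos B ((i+t) % (2*B-1)) = 2*j ∧ busPos B ((k+t) % (2*B-1)) = 2*j+1) ∨
      (busPos B ((i+t) % (2*B-1)) = 2*j+1 ∧ busPos B ((k+t) % (2*B-1)) = 2*j) := by
  have hN0 : 0 < 2*B-1 := by omega
  obtain ⟨d, hd1, hd2, hkd⟩ : ∃ d, 1 ≤ d ∧ d < 2*B-1 ∧ k = (i + d) % (2*B-1) := by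
    rcases Nat.lt_or_ge i k with h | h
    · exact ⟨k - i, by omega, by omega, by rw [Nat.mod_eq_of_lt (by omega)]; omega⟩
    · refine ⟨k + (2*B-1) - i, by omega, by omega, ?_⟩
      rw [mod2N (2*B-1) _ (by omega)]; split_ifs <;> omega
  have key : ∀ u v : ℕ, u < 2*B-1 → v < 2*B-1 → v = (u + d) % (2*B-1) →
      ∃ t < 2*B-1, (i + t) % (2*B-1) = u ∧ (k + t) % (2*B-1) = v := by
    intro u v hu hv hvud
    refine ⟨(u + (2*B-1) - i) % (2*B-1), Nat.mod_lt _ hN0, ?_, ?_⟩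
    · have := shift' (2*B-1) i i u 0 hi hi hu hN0 (by simp [Nat.mod_eq_of_lt hi])
      simpa [Nat.mod_eq_of_lt hu] using this
    · rw [shift' (2*B-1) i k u d hi hk hu hd2 hkd]; omega
  rcases Nat.even_or_odd d with he | ho
  · by_cases hdn : d = 2*B-2
    · obtain ⟨t, ht, h1, h2⟩ := key 1 0 (by omega) (by omega)
        (by rw [mod2N (2*B-1) (1+d) (by omega)]; split_ifs <;> omega)
      refine ⟨t, ht, 0, by omega, Or.inr ⟨?_, ?_⟩⟩
      · rw [h1]; unfold busPos; split_ifs <;> (try exact ‹False›.elim) <;> omega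
      · rw [h2]; unfold busPos; split_ifs <;> (try exact ‹False›.elim) <;> omega
    · obtain ⟨j, hj⟩ : ∃ j, d = 2*B-2-2*j ∧ 1 ≤ j ∧ j ≤ B-2 := by
        obtain ⟨m, hm⟩ := he
        exact ⟨B-1-m, by omega⟩
      obtain ⟨t, ht, h1, h2⟩ := key (j+1) (2*B-1-j) (by omega) (by omega)
        (by rw [mod2N (2*B-1) (j+1+d) (by omega)]; split_ifs <;> omega)
      refine ⟨t, ht, j, by omega, Or.inr ⟨?_, ?_⟩⟩
      · rw [h1]; unfold busPos; split_ifs <;> (try exact ‹False›.elim) <;> omega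
      · rw [h2]; unfold busPos; split_ifs <;> (try exact ‹False›.elim) <;> omega
  · by_cases hdn : d = 1
    · obtain ⟨t, ht, h1, h2⟩ := key 0 1 (by omega) (by omega)
        (by rw [mod2N (2*B-1) (0+d) (by omega)]; split_ifs <;> omega)
      refine ⟨t, ht, 0, by omega, Or.inl ⟨?_, ?_⟩⟩
      · rw [h1]; unfold busPos; split_ifs <;> (try exact ‹False›.elim) <;> omega
      · rw [h2]; unfold busPos; split_ifs <;> (try exact ‹False›.elim) <;> omega
    · obtain ⟨j, hj⟩ : ∃ j, d = 2*j+1 ∧ 1 ≤ j ∧ j ≤ B-2 := by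
        obtain ⟨m, hm⟩ := ho
        exact ⟨m, by omega⟩
      obtain ⟨t, ht, h1, h2⟩ := key (2*B-1-j) (j+1) (by omega) (by omega)
        (by rw [mod2N (2*B-1) (2*B-1-j+d) (by omega)]; split_ifs <;> omega)
      refine ⟨t, ht, j, by omega, Or.inl ⟨?_, ?_⟩⟩
      · rw [h1]; unfold busPos; split_ifs <;> (try exact ‹False›.elim) <;> omega
      · rw [h2]; unfold busPos; split_ifs <;> (try exact ‹False›.elim) <;> omega

/-- For every `B ≥ 2`, the busNNN double-step permutation
`σ = A ∘ I` achieves full connectivity within `2B - 1` double-steps: for every pair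
of distinct columns `a ≠ b` there are `t ∈ {0, …, 2B-2}` and a bus `j < B` with
`{σᵗ a, σᵗ b} = {2j, 2j+1}`. -/
theorem busNNN_double_step_full_connectivity (B : ℕ) (hB : 2 ≤ B) :
    ∀ a b : Fin (2 * B), a ≠ b → ∃ t ≤ 2 * B - 2, ∃ j < B,
      OnBus B j (((intraLayer B * interLayer B) ^ t) a)
        (((intraLayer B * interLayer B) ^ t) b) := by
  intro a b hab
  have hN0 : 0 < 2*B - 1 := by omega
  by_cases ha : a.1 = 2*B - 1
  · have hb : b.1 ≠ 2*B - 1 := fun h => hab (Fin.ext (by omega))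
    obtain ⟨i, hi, hip⟩ := exists_index B b.1 hB b.2 hb
    have eb : b = ⟨busPos B i, busPos_lt B i hB hi⟩ := Fin.ext (by simp [hip])
    refine ⟨(B + (2*B-1) - i) % (2*B-1), by have := Nat.mod_lt (B + (2*B-1) - i) hN0; omega,
      B - 1, by omega, Or.inr ⟨?_, ?_⟩⟩
    · rw [pow_fixed B hB _ a ha]; omega
    · rw [eb, pow_busPos B hB _ i hi]
      have hsh := shift' (2*B-1) i i B 0 hi hi (by omega) hN0 (by simp [Nat.mod_eq_of_lt hi])
      simp only [Nat.add_zero, Nat.mod_eq_of_lt (show B < 2*B-1 by omega)] at hsh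
      rw [hsh]
      unfold busPos; split_ifs <;> (try exact ‹False›.elim) <;> omega
  · by_cases hb : b.1 = 2*B - 1
    · obtain ⟨i, hi, hip⟩ := exists_index B a.1 hB a.2 ha
      have ea : a = ⟨busPos B i, busPos_lt B i hB hi⟩ := Fin.ext (by simp [hip])
      refine ⟨(B + (2*B-1) - i) % (2*B-1), by have := Nat.mod_lt (B + (2*B-1) - i) hN0; omega,
        B - 1, by omega, Or.inl ⟨?_, ?_⟩⟩
      · rw [ea, pow_busPos B hB _ i hi]
        have hsh := shift' (2*B-1) i i B 0 hi hi (by omega) hN0 (by simp [Nat.mod_eq_of_lt hi])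
        simp only [Nat.add_zero, Nat.mod_eq_of_lt (show B < 2*B-1 by omega)] at hsh
        rw [hsh]
        unfold busPos; split_ifs <;> (try exact ‹False›.elim) <;> omega
      · rw [pow_fixed B hB _ b hb]; omega
    · obtain ⟨i, hi, hip⟩ := exists_index B a.1 hB a.2 ha
      obtain ⟨k, hk, hkp⟩ := exists_index B b.1 hB b.2 hb
      have ea : a = ⟨busPos B i, busPos_lt B i hB hi⟩ := Fin.ext (by simp [hip])
      have eb : b = ⟨busPos B k, busPos_lt B k hB hk⟩ := Fin.ext (by simp [hkp])
      have hik : i ≠ k := by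
        rintro rfl
        exact hab (by rw [ea, eb])
      obtain ⟨t, ht, j, hj, hcase⟩ := core B i k hB hi hk hik
      refine ⟨t, by omega, j, hj, ?_⟩
      unfold OnBus
      rw [ea, eb, pow_busPos B hB t i hi, pow_busPos B hB t k hk]
      exact hcase
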